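/- Let K be a positive natural number, p : Fin K → ℝ a probability vector with p_k > 0 for all k and ∑_k p_k = 1, and a : Fin K → ℝ a prior with a_k > 0 for all k. For each natural number n define α_k(n) = a_k + n·p_k and S(n) = ∑_k α_k(n). Then the epistemic uncertainty converges to zero: lim_{n→∞} [ ∑_k negMulLog(α_k(n)/S(n)) − ∑_k (α_k(n)/S(n)) · (ψ(S(n)+1) − ψ(α_k(n)+1)) ] = 0. (Parametric Epistemic Convergence, epistemic part: as training samples in a leaf tend to infinity, parametric epistemic uncertainty converges to zero.) -/

import Mathlib

/-- The digamma function: the logarithmic derivative of the Gamma function. -/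
noncomputable def digamma (x : ℝ) : ℝ :=
  deriv (fun t => Real.log (Real.Gamma t)) x

open Set Filter

lemma logGamma_diff : ∀ s ∈ Set.Ioi (0:ℝ),
    DifferentiableAt ℝ (fun t => Real.log (Real.Gamma t)) s := by
  intro s hs
  exact (Real.differentiableAt_Gamma (fun m => by
    have : (0:ℝ) ≤ m := Nat.cast_nonneg m
    intro h; rw [h] at hs; simp at hs; linarith)).log
    (Real.Gamma_pos_of_pos hs).ne'

lemma slope_logGamma {x : ℝ} (hx : 0 < x) :
    slope (fun t => Real.log (Real.Gamma t)) x (x + 1) = Real.log x := by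
  rw [slope_def_field]
  have h1 : Real.Gamma (x + 1) = x * Real.Gamma x := Real.Gamma_add_one hx.ne'
  field_simp
  rw [h1, Real.log_mul hx.ne' (Real.Gamma_pos_of_pos hx).ne']
  ring

lemma log_le_digamma_succ {x : ℝ} (hx : 0 < x) : Real.log x ≤ digamma (x + 1) := by
  have h := Real.convexOn_log_Gamma.slope_le_deriv (Set.mem_Ioi.2 hx)
    (Set.mem_Ioi.2 (by linarith : (0:ℝ) < x + 1)) (by linarith)
    (logGamma_diff _ (Set.mem_Ioi.2 (by linarith)))
  rw [show (Real.log ∘ Real.Gamma) = (fun t => Real.log (Real.Gamma t)) from rfl] at h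
  calc Real.log x = slope (fun t => Real.log (Real.Gamma t)) x (x+1) := (slope_logGamma hx).symm
    _ ≤ _ := h

lemma digamma_succ_le_log {x : ℝ} (hx : 0 < x) : digamma (x + 1) ≤ Real.log (x + 1) := by
  have h := Real.convexOn_log_Gamma.deriv_le_slope (Set.mem_Ioi.2 (by linarith : (0:ℝ) < x + 1))
    (Set.mem_Ioi.2 (by linarith : (0:ℝ) < x + 2)) (by linarith)
    (logGamma_diff _ (Set.mem_Ioi.2 (by linarith)))
  rw [show (Real.log ∘ Real.Gamma) = (fun t => Real.log (Real.Gamma t)) from rfl] at h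
  have h2 : slope (fun t => Real.log (Real.Gamma t)) (x+1) ((x+1) + 1) = Real.log (x+1) :=
    slope_logGamma (by linarith)
  calc digamma (x+1) ≤ slope (fun t => Real.log (Real.Gamma t)) (x+1) (x+2) := h
    _ = Real.log (x+1) := by rw [show x + 2 = (x+1)+1 by ring]; exact h2

/-- **Parametric Epistemic Convergence (epistemic part).** For Dirichlet posterior
parameters `α k (n) = a k + n * p k` with positive prior `a` and true data distribution
`p` (a positive probability vector), the epistemic uncertainty
`H_epistemic = H_total − H_aleatoric
  = ∑ k, negMulLog (α k / S) − ∑ k, (α k / S)(ψ(S+1) − ψ(α k + 1))`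
converges to zero as the number of training samples `n → ∞`. -/
theorem epistemic_tendsto_zero (K : ℕ) (hK : 0 < K)
    (p : Fin K → ℝ) (hp : ∀ k, 0 < p k) (hpsum : ∑ k, p k = 1)
    (a : Fin K → ℝ) (ha : ∀ k, 0 < a k) :
    Filter.Tendsto
      (fun n : ℕ =>
        (∑ k, Real.negMulLog ((a k + n * p k) / ∑ j, (a j + n * p j))) -
          ∑ k, ((a k + n * p k) / ∑ j, (a j + n * p j)) *
            (digamma ((∑ j, (a j + n * p j)) + 1) - digamma ((a k + n * p k) + 1)))
      Filter.atTop (nhds 0) := by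
  have hα : ∀ (n : ℕ) (k : Fin K), 0 < a k + n * p k := by
    intro n k
    have := (ha k); have := (hp k); positivity
  have hS : ∀ n : ℕ, 0 < ∑ j, (a j + n * p j) := by
    intro n
    apply Finset.sum_pos (fun j _ => hα n j)
    have : Nonempty (Fin K) := Fin.pos_iff_nonempty.mp hK
    exact Finset.univ_nonempty
  have hαS : ∀ (n : ℕ) (k : Fin K), a k + n * p k ≤ ∑ j, (a j + n * p j) := by
    intro n k
    exact Finset.single_le_sum (fun j _ => (hα n j).le) (Finset.mem_univ k)
  apply squeeze_zero_norm (a := fun n : ℕ => ∑ k, Real.log (1 + 1/(a k + n * p k)))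
  · intro n
    set S := ∑ j, (a j + n * p j) with hSdef
    have hrw : (∑ k, Real.negMulLog ((a k + n * p k) / S)) -
        ∑ k, ((a k + n * p k) / S) *
          (digamma (S + 1) - digamma ((a k + n * p k) + 1)) =
        ∑ k, ((a k + n * p k) / S) *
          ((Real.log S - Real.log (a k + n * p k)) -
            (digamma (S + 1) - digamma ((a k + n * p k) + 1))) := by
      rw [← Finset.sum_sub_distrib]
      apply Finset.sum_congr rfl
      intro k _
      rw [Real.negMulLog, Real.log_div (hα n k).ne' (hS n).ne']
      ring
    rw [hrw, Real.norm_eq_abs]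
    refine (Finset.abs_sum_le_sum_abs _ _).trans (Finset.sum_le_sum ?_)
    intro k _
    set α := a k + n * p k with hαdef
    have hα0 := hα n k
    have hS0 := hS n
    have hle := hαS n k
    have hb1 : Real.log S ≤ digamma (S + 1) := log_le_digamma_succ hS0
    have hb2 : digamma (S + 1) ≤ Real.log (S + 1) := digamma_succ_le_log hS0
    have hb3 : Real.log α ≤ digamma (α + 1) := log_le_digamma_succ hα0
    have hb4 : digamma (α + 1) ≤ Real.log (α + 1) := digamma_succ_le_log hα0
    have hlogα : Real.log (1 + 1/α) = Real.log (α + 1) - Real.log α := by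
      rw [← Real.log_div (by positivity) hα0.ne']
      congr 1; rw [add_div, div_self (hα0.ne' : α ≠ 0)]
    have hmono : Real.log (S + 1) - Real.log S ≤ Real.log (α + 1) - Real.log α := by
      have h1 : Real.log (S + 1) - Real.log S = Real.log (1 + 1/S) := by
        rw [← Real.log_div (by positivity) hS0.ne']
        congr 1; rw [add_div, div_self (hS0.ne' : S ≠ 0)]
      rw [h1, ← hlogα]
      apply Real.log_le_log (by positivity)
      have : 1/S ≤ 1/α := one_div_le_one_div_of_le hα0 hle
      linarith
    have hbound : |(Real.log S - Real.log α) -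
        (digamma (S + 1) - digamma (α + 1))| ≤ Real.log (1 + 1/α) := by
      rw [abs_le, hlogα]
      constructor <;> nlinarith
    have hfrac : α / S ≤ 1 := (div_le_one hS0).mpr hle
    calc |α / S * ((Real.log S - Real.log α) -
          (digamma (S + 1) - digamma (α + 1)))|
        = (α / S) * |(Real.log S - Real.log α) -
          (digamma (S + 1) - digamma (α + 1))| := by
          rw [abs_mul, abs_of_pos (by positivity)]
      _ ≤ 1 * Real.log (1 + 1/α) := by
          apply mul_le_mul hfrac hbound (abs_nonneg _) zero_le_one
      _ = Real.log (1 + 1/α) := one_mul _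
  · rw [show (0:ℝ) = ∑ _k : Fin K, (0:ℝ) by simp]
    apply tendsto_finset_sum
    intro k _
    have h1 : Filter.Tendsto (fun n : ℕ => a k + n * p k) Filter.atTop Filter.atTop := by
      apply Filter.tendsto_atTop_add_const_left
      exact (tendsto_natCast_atTop_atTop (R := ℝ)).atTop_mul_const (hp k)
    have h2 : Filter.Tendsto (fun n : ℕ => 1/(a k + n * p k)) Filter.atTop (nhds 0) := by
      simpa [Pi.inv_def] using h1.inv_tendsto_atTop
    have h3 : Filter.Tendsto (fun n : ℕ => 1 + 1/(a k + n * p k)) Filter.atTop (nhds 1) := by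
      simpa using tendsto_const_nhds.add h2
    have := (Real.continuousAt_log (by norm_num : (1:ℝ) ≠ 0)).tendsto.comp h3
    simpa [Function.comp_def, Real.log_one] using this
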